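/- Let U be a finite nonempty set of size n, P₁,...,P_k ⊆ U covering U, and BI : U → Fin k a function with u ∈ P_{BI(u)} and |P_{BI(u)}| = max{|P_j| : u ∈ P_j} for all u. Then for every cover OPT : U → Fin k, Ent(BI) ≤ Ent(OPT) + log₂ f, where f = (Σ_j |P_j|)/n and Ent(g) = -Σ_i (|g⁻¹(i)|/n)·log₂(|g⁻¹(i)|/n). -/

import Mathlib

open Finset Real

/-- Gibbs-type inequality core, in natural logarithms. -/
lemma gibbs_aux (k : ℕ) (b o p : Fin k → ℕ) (N f : ℝ)
    (hN : 0 < N) (hf : 1 ≤ f)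
    (hbsum : ∑ i, (b i : ℝ) = N)
    (hosum : ∑ i, (o i : ℝ) = N)
    (hpsum : ∑ i, (p i : ℝ) = f * N)
    (hbp : ∀ i, b i ≠ 0 → 0 < p i)
    (hmain : ∑ i, (o i : ℝ) * Real.log (o i) ≤ ∑ i, (b i : ℝ) * Real.log (p i)) :
    -∑ i, ((b i : ℝ)/N) * Real.log ((b i : ℝ)/N)
      ≤ -∑ i, ((o i : ℝ)/N) * Real.log ((o i : ℝ)/N) + Real.log f := by
  have hf0 : (0:ℝ) < f := lt_of_lt_of_le zero_lt_one hf
  have hfN : (0:ℝ) < f * N := mul_pos hf0 hN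
  have hNne : N ≠ 0 := ne_of_gt hN
  have hfNne : f * N ≠ 0 := ne_of_gt hfN
  -- Step A : Gibbs' inequality
  have stepA : ∑ i, ((b i : ℝ)/N) * Real.log ((p i : ℝ)/(f*N))
      - ∑ i, ((b i : ℝ)/N) * Real.log ((b i : ℝ)/N) ≤ 0 := by
    rw [← Finset.sum_sub_distrib]
    calc ∑ i, (((b i:ℝ)/N) * Real.log ((p i : ℝ)/(f*N)) - ((b i:ℝ)/N) * Real.log ((b i : ℝ)/N))
        ≤ ∑ i, ((p i:ℝ)/(f*N) - (b i:ℝ)/N) := by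
          apply Finset.sum_le_sum
          intro i _
          by_cases hbi : b i = 0
          · simp only [hbi, Nat.cast_zero, zero_div, zero_mul, sub_zero, zero_sub, sub_self]
            have : (0:ℝ) ≤ (p i:ℝ)/(f*N) := by positivity
            linarith
          · have hb0 : (0:ℝ) < (b i : ℝ) := by
              exact_mod_cast Nat.pos_of_ne_zero hbi
            have hp0 : (0:ℝ) < (p i : ℝ) := by exact_mod_cast hbp i hbi
            have hx : (0:ℝ) < ((p i:ℝ)/(f*N)) / ((b i:ℝ)/N) := by positivity
            have hsub : Real.log ((p i:ℝ)/(f*N)) - Real.log ((b i:ℝ)/N)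
                = Real.log (((p i:ℝ)/(f*N)) / ((b i:ℝ)/N)) :=
              (Real.log_div (by positivity) (by positivity)).symm
            rw [← mul_sub, hsub]
            calc ((b i:ℝ)/N) * Real.log (((p i:ℝ)/(f*N)) / ((b i:ℝ)/N))
                ≤ ((b i:ℝ)/N) * (((p i:ℝ)/(f*N)) / ((b i:ℝ)/N) - 1) := by
                  apply mul_le_mul_of_nonneg_left (Real.log_le_sub_one_of_pos hx)
                  positivity
              _ = (p i:ℝ)/(f*N) - (b i:ℝ)/N := by
                  field_simp
      _ = 0 := by
          rw [Finset.sum_sub_distrib, ← Finset.sum_div, ← Finset.sum_div, hpsum, hbsum]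
          field_simp
          ring
  -- Step B : expand log (p/(fN)) termwise
  have stepB : ∑ i, ((b i : ℝ)/N) * Real.log ((p i : ℝ)/(f*N))
      = ∑ i, ((b i : ℝ)/N) * Real.log (p i : ℝ) - (Real.log f + Real.log N) := by
    have h1 : ∑ i, ((b i : ℝ)/N) * Real.log ((p i : ℝ)/(f*N))
        = ∑ i, (((b i : ℝ)/N) * Real.log (p i : ℝ) - ((b i : ℝ)/N) * Real.log (f*N)) := by
      apply Finset.sum_congr rfl
      intro i _
      by_cases hbi : b i = 0
      · simp [hbi]
      · have hp0 : (0:ℝ) < (p i : ℝ) := by exact_mod_cast hbp i hbi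
        rw [Real.log_div (ne_of_gt hp0) hfNne, mul_sub]
    rw [h1, Finset.sum_sub_distrib, ← Finset.sum_mul, ← Finset.sum_div, hbsum,
      div_self hNne, one_mul, Real.log_mul (ne_of_gt hf0) hNne]
  -- Step D' : divide hmain by N
  have stepD : ∑ i, ((o i : ℝ)/N) * Real.log (o i : ℝ)
      ≤ ∑ i, ((b i : ℝ)/N) * Real.log (p i : ℝ) := by
    have e1 : ∑ i, ((o i : ℝ)/N) * Real.log (o i : ℝ)
        = (∑ i, (o i : ℝ) * Real.log (o i : ℝ)) / N := by
      rw [Finset.sum_div]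
      exact Finset.sum_congr rfl fun i _ => by ring
    have e2 : ∑ i, ((b i : ℝ)/N) * Real.log (p i : ℝ)
        = (∑ i, (b i : ℝ) * Real.log (p i : ℝ)) / N := by
      rw [Finset.sum_div]
      exact Finset.sum_congr rfl fun i _ => by ring
    rw [e1, e2]
    exact div_le_div_of_nonneg_right hmain hN.le |>.trans_eq rfl
  -- Step E : expand log (o/N) termwise
  have stepE : ∑ i, ((o i : ℝ)/N) * Real.log ((o i : ℝ)/N)
      = ∑ i, ((o i : ℝ)/N) * Real.log (o i : ℝ) - Real.log N := by
    have h1 : ∑ i, ((o i : ℝ)/N) * Real.log ((o i : ℝ)/N)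
        = ∑ i, (((o i : ℝ)/N) * Real.log (o i : ℝ) - ((o i : ℝ)/N) * Real.log N) := by
      apply Finset.sum_congr rfl
      intro i _
      by_cases hoi : o i = 0
      · simp [hoi]
      · have ho0 : (0:ℝ) < (o i : ℝ) := by
          exact_mod_cast Nat.pos_of_ne_zero hoi
        rw [Real.log_div (ne_of_gt ho0) hNne, mul_sub]
    rw [h1, Finset.sum_sub_distrib, ← Finset.sum_mul, ← Finset.sum_div, hosum,
      div_self hNne, one_mul]
  linarith

/-- The same inequality with `logb 2`. -/
lemma gibbs_aux' (k : ℕ) (b o p : Fin k → ℕ) (N f : ℝ)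
    (hN : 0 < N) (hf : 1 ≤ f)
    (hbsum : ∑ i, (b i : ℝ) = N)
    (hosum : ∑ i, (o i : ℝ) = N)
    (hpsum : ∑ i, (p i : ℝ) = f * N)
    (hbp : ∀ i, b i ≠ 0 → 0 < p i)
    (hmain : ∑ i, (o i : ℝ) * Real.log (o i) ≤ ∑ i, (b i : ℝ) * Real.log (p i)) :
    -∑ i, ((b i : ℝ)/N) * Real.logb 2 ((b i : ℝ)/N)
      ≤ -∑ i, ((o i : ℝ)/N) * Real.logb 2 ((o i : ℝ)/N) + Real.logb 2 f := by
  have h := gibbs_aux k b o p N f hN hf hbsum hosum hpsum hbp hmain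
  have h2 : (0:ℝ) < Real.log 2 := Real.log_pos one_lt_two
  simp only [Real.logb, ← mul_div_assoc, ← Finset.sum_div, ← neg_div, ← add_div]
  exact div_le_div_of_nonneg_right h h2.le

theorem biased_entropy_bound {α : Type*} [Fintype α] [DecidableEq α] [Nonempty α]
    (k : ℕ) (P : Fin k → Finset α) (hcover : ∀ u : α, ∃ i, u ∈ P i)
    (BI : α → Fin k) (hBI : ∀ u, u ∈ P (BI u))
    (hBImax : ∀ u i, u ∈ P i → (P i).card ≤ (P (BI u)).card)
    (OPT : α → Fin k) (hOPT : ∀ u, u ∈ P (OPT u))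
    (n : ℕ) (hn : n = Fintype.card α)
    (f : ℝ) (hf : f = (∑ j, ((P j).card : ℝ)) / n) :
    -∑ i, ((Finset.univ.filter (fun u => BI u = i)).card / (n : ℝ)) *
        Real.logb 2 ((Finset.univ.filter (fun u => BI u = i)).card / (n : ℝ))
      ≤ -∑ i, ((Finset.univ.filter (fun u => OPT u = i)).card / (n : ℝ)) *
          Real.logb 2 ((Finset.univ.filter (fun u => OPT u = i)).card / (n : ℝ))
        + Real.logb 2 f := by
  classical
  have hn0 : 0 < n := hn ▸ Fintype.card_pos
  have hN : (0:ℝ) < (n : ℝ) := by exact_mod_cast hn0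
  set b : Fin k → ℕ := fun i => (Finset.univ.filter (fun u => BI u = i)).card with hbdef
  set o : Fin k → ℕ := fun i => (Finset.univ.filter (fun u => OPT u = i)).card with hodef
  -- fiber sums
  have hbsum : ∑ i, (b i : ℝ) = (n : ℝ) := by
    have := Finset.card_eq_sum_card_fiberwise
      (fun x (_ : x ∈ Finset.univ) => Finset.mem_univ (BI x)) (t := Finset.univ)
    rw [Finset.card_univ] at this
    rw [← Nat.cast_sum]
    exact_mod_cast congrArg (Nat.cast : ℕ → ℝ) (hn ▸ this.symm)
  have hosum : ∑ i, (o i : ℝ) = (n : ℝ) := by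
    have := Finset.card_eq_sum_card_fiberwise
      (fun x (_ : x ∈ Finset.univ) => Finset.mem_univ (OPT x)) (t := Finset.univ)
    rw [Finset.card_univ] at this
    rw [← Nat.cast_sum]
    exact_mod_cast congrArg (Nat.cast : ℕ → ℝ) (hn ▸ this.symm)
  -- fibers of OPT are inside P i
  have hosub : ∀ i, (Finset.univ.filter (fun u => OPT u = i)) ⊆ P i := by
    intro i u hu
    rw [Finset.mem_filter] at hu
    exact hu.2 ▸ hOPT u
  have hole : ∀ i, (o i : ℝ) ≤ ((P i).card : ℝ) := by
    intro i
    exact_mod_cast Finset.card_le_card (hosub i)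
  have hpsum : ∑ i, ((P i).card : ℝ) = f * (n : ℝ) := by
    rw [hf, div_mul_cancel₀]
    exact ne_of_gt hN
  have hf1 : 1 ≤ f := by
    have hge : (n : ℝ) ≤ ∑ i, ((P i).card : ℝ) := by
      rw [← hosum]
      exact Finset.sum_le_sum (fun i _ => hole i)
    rw [hf]
    rw [le_div_iff₀ hN, one_mul]
    exact hge
  have hbp : ∀ i, b i ≠ 0 → 0 < (P i).card := by
    intro i hi
    obtain ⟨u, hu⟩ := Finset.card_pos.mp (Nat.pos_of_ne_zero hi)
    rw [Finset.mem_filter] at hu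
    exact Finset.card_pos.mpr ⟨u, hu.2 ▸ hBI u⟩
  -- main combinatorial inequality
  have hmain : ∑ i, (o i : ℝ) * Real.log (o i)
      ≤ ∑ i, (b i : ℝ) * Real.log ((P i).card) := by
    have eo : ∑ i, (o i : ℝ) * Real.log (o i)
        = ∑ u : α, Real.log (o (OPT u)) := by
      rw [← Finset.sum_fiberwise (Finset.univ) OPT (fun u => Real.log (o (OPT u)))]
      apply Finset.sum_congr rfl
      intro i _
      rw [show ∑ u ∈ Finset.univ.filter (fun u => OPT u = i), Real.log (o (OPT u))
          = ∑ u ∈ Finset.univ.filter (fun u => OPT u = i), Real.log (o i) from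
        Finset.sum_congr rfl (fun u hu => by
          rw [(Finset.mem_filter.mp hu).2])]
      rw [Finset.sum_const, nsmul_eq_mul]
    have eb : ∑ i, (b i : ℝ) * Real.log ((P i).card)
        = ∑ u : α, Real.log ((P (BI u)).card) := by
      rw [← Finset.sum_fiberwise (Finset.univ) BI (fun u => Real.log ((P (BI u)).card))]
      apply Finset.sum_congr rfl
      intro i _
      rw [show ∑ u ∈ Finset.univ.filter (fun u => BI u = i), Real.log (((P (BI u)).card : ℝ))
          = ∑ u ∈ Finset.univ.filter (fun u => BI u = i), Real.log (((P i).card : ℝ)) from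
        Finset.sum_congr rfl (fun u hu => by
          rw [(Finset.mem_filter.mp hu).2])]
      rw [Finset.sum_const, nsmul_eq_mul]
    rw [eo, eb]
    apply Finset.sum_le_sum
    intro u _
    have h1 : 0 < o (OPT u) := by
      apply Finset.card_pos.mpr
      exact ⟨u, Finset.mem_filter.mpr ⟨Finset.mem_univ u, rfl⟩⟩
    have h2 : o (OPT u) ≤ (P (OPT u)).card := Finset.card_le_card (hosub (OPT u))
    have h3 : (P (OPT u)).card ≤ (P (BI u)).card := hBImax u (OPT u) (hOPT u)
    apply Real.log_le_log
    · exact_mod_cast h1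
    · exact_mod_cast le_trans h2 h3
  exact gibbs_aux' k b o (fun i => (P i).card) (n : ℝ) f hN hf1 hbsum hosum hpsum hbp hmain
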